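/- Let (b_{ij})_{1 ≤ i < j} be independent real random variables on a common probability space with E b_{ij} = 0, and suppose there exist a constant M > 0 and a real random variable X with E|X|⁴ < ∞ such that P(|b_{ij}| > t) ≤ M·P(|X| > t) for every t > 0 and every i < j. Then there exists a sequence of positive reals ε_n → 0 such that almost surely, for all but finitely many n, max_{1 ≤ i < j ≤ n} |b_{ij}| < ε_n·√n. -/

import Mathlib

open MeasureTheory ProbabilityTheory Filter

open scoped ENNReal NNReal

lemma tsum_sq_indicator_le (y : ℝ) :
    ∑' n : ℕ, (if ((n:ℝ)^2 < y) then (n:ℝ≥0∞) else 0) ≤ ENNReal.ofReal (2*y) := by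
  rw [ENNReal.tsum_eq_iSup_sum]
  refine iSup_le fun s => ?_
  rcases le_or_gt y 0 with hy | hy
  · have : ∀ n ∈ s, (if ((n:ℝ)^2 < y) then (n:ℝ≥0∞) else 0) = 0 := by
      intro n _
      exact if_neg (not_lt.2 (hy.trans (sq_nonneg _)))
    rw [Finset.sum_eq_zero this]
    exact zero_le
  · set m := Nat.floor (Real.sqrt y) with hm
    have hsub : s.filter (fun n : ℕ => ((n:ℝ)^2 < y)) ⊆ Finset.range (m+1) := by
      intro n hn
      rw [Finset.mem_filter] at hn
      rw [Finset.mem_range, Nat.lt_succ_iff]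
      exact Nat.le_floor (Real.le_sqrt_of_sq_le hn.2.le)
    calc ∑ n ∈ s, (if ((n:ℝ)^2 < y) then (n:ℝ≥0∞) else 0)
        = ∑ n ∈ s.filter (fun n : ℕ => ((n:ℝ)^2 < y)), (n:ℝ≥0∞) := by
          rw [Finset.sum_filter]
      _ ≤ ∑ n ∈ Finset.range (m+1), (n:ℝ≥0∞) := Finset.sum_le_sum_of_subset hsub
      _ = ((∑ n ∈ Finset.range (m+1), n : ℕ) : ℝ≥0∞) := by push_cast; ring
      _ ≤ ENNReal.ofReal (2*y) := by
          rw [← ENNReal.ofReal_natCast]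
          refine ENNReal.ofReal_le_ofReal ?_
          have h1 : (∑ n ∈ Finset.range (m+1), n) ≤ m * m := by
            have h := Finset.sum_range_id_mul_two (m+1)
            simp only [Nat.add_sub_cancel] at h
            nlinarith
          have h2 : ((m:ℝ) * m) ≤ y := by
            have hfl : (m:ℝ) ≤ Real.sqrt y := Nat.floor_le (Real.sqrt_nonneg y)
            calc (m:ℝ) * m ≤ Real.sqrt y * Real.sqrt y := by
                  exact mul_le_mul hfl hfl (Nat.cast_nonneg m) (Real.sqrt_nonneg y)
              _ = y := Real.mul_self_sqrt hy.le
          calc ((∑ n ∈ Finset.range (m+1), n : ℕ) : ℝ) ≤ ((m*m : ℕ):ℝ) := by exact_mod_cast h1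
            _ = (m:ℝ)*m := by push_cast; ring
            _ ≤ y := h2
            _ ≤ 2*y := by linarith

lemma tsum_mul_meas_ne_top {Ω : Type*} [MeasureSpace Ω] [IsProbabilityMeasure (ℙ : Measure Ω)]
    {Y : Ω → ℝ} (hYm : Measurable Y) (hY : Integrable Y ℙ) :
    ∑' n : ℕ, (n : ℝ≥0∞) * ℙ {ω : Ω | (n:ℝ)^2 < Y ω} ≠ ∞ := by
  have hms : ∀ n : ℕ, MeasurableSet {ω : Ω | (n:ℝ)^2 < Y ω} := fun n =>
    measurableSet_lt measurable_const hYm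
  have key : ∑' n : ℕ, (n : ℝ≥0∞) * ℙ {ω : Ω | (n:ℝ)^2 < Y ω}
      = ∫⁻ ω, ∑' n : ℕ, Set.indicator {ω : Ω | (n:ℝ)^2 < Y ω} (fun _ => (n:ℝ≥0∞)) ω ∂ℙ := by
    rw [lintegral_tsum (fun n => ((measurable_const.indicator (hms n)).aemeasurable))]
    congr 1
    funext n
    rw [lintegral_indicator_const (hms n)]
  rw [key]
  have hb : ∫⁻ ω, ∑' n : ℕ, Set.indicator {ω : Ω | (n:ℝ)^2 < Y ω} (fun _ => (n:ℝ≥0∞)) ω ∂ℙ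
      ≤ ∫⁻ ω, ENNReal.ofReal (2 * Y ω) ∂ℙ := by
    refine lintegral_mono fun ω => ?_
    have : ∀ n : ℕ, Set.indicator {ω : Ω | (n:ℝ)^2 < Y ω} (fun _ => (n:ℝ≥0∞)) ω
        = (if ((n:ℝ)^2 < Y ω) then (n:ℝ≥0∞) else 0) := by
      intro n
      simp [Set.indicator_apply]
    rw [tsum_congr this]
    exact tsum_sq_indicator_le (Y ω)
  exact ne_top_of_le_ne_top ((hY.const_mul 2).lintegral_lt_top).ne hb

lemma sqrt_nat_tendsto : Tendsto (fun n : ℕ => Real.sqrt n) atTop atTop := by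
  refine tendsto_atTop_atTop.2 fun S => ⟨⌈S^2⌉₊, fun n hn => Real.le_sqrt_of_sq_le ?_⟩
  calc S^2 ≤ (⌈S^2⌉₊:ℝ) := Nat.le_ceil _
    _ ≤ n := by exact_mod_cast hn

lemma aux_column {Ω : Type*} [MeasureSpace Ω] [IsProbabilityMeasure (ℙ : Measure Ω)]
    (b : ℕ → ℕ → Ω → ℝ)
    (M : ℝ) (X : Ω → ℝ) (hXmeas : Measurable X)
    (hX4 : Integrable (fun ω => |X ω| ^ 4) ℙ)
    (htail : ∀ t : ℝ, 0 < t → ∀ i j, i < j →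
      ℙ {ω | t < |b i j ω|} ≤ ENNReal.ofReal M * ℙ {ω | t < |X ω|})
    (c : ℝ) (hc : 0 < c) :
    ∀ᵐ ω ∂ℙ, ∀ᶠ n : ℕ in atTop, ∀ i, i < n → |b i n ω| < c * Real.sqrt n := by
  set d := c/2 with hd
  have hdpos : 0 < d := by positivity
  set Y : Ω → ℝ := fun ω => (|X ω| / d)^4 with hYdef
  have hYm : Measurable Y := ((hXmeas.abs).div_const d).pow_const 4
  have hYint : Integrable Y ℙ := by
    have : Y = fun ω => (1/d^4) * |X ω|^4 := funext fun ω => by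
      simp only [hYdef, div_pow]
      ring
    rw [this]
    exact hX4.const_mul _
  set s : ℕ → Set Ω := fun n => ⋃ i ∈ Finset.range n, {ω | c * Real.sqrt n ≤ |b i n ω|}
    with hsdef
  have hsum : ∑' n, ℙ (s n) ≠ ∞ := by
    have hbound : ∀ n : ℕ,
        ℙ (s n) ≤ ENNReal.ofReal M * ((n:ℝ≥0∞) * ℙ {ω | (n:ℝ)^2 < Y ω}) := by
      intro n
      calc ℙ (s n) ≤ ∑ i ∈ Finset.range n, ℙ {ω | c * Real.sqrt n ≤ |b i n ω|} :=
            measure_biUnion_finset_le _ _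
        _ ≤ ∑ _i ∈ Finset.range n, (ENNReal.ofReal M * ℙ {ω | (n:ℝ)^2 < Y ω}) := by
            refine Finset.sum_le_sum fun i hi => ?_
            rw [Finset.mem_range] at hi
            have hn0 : (0:ℝ) < n := by
              have : 0 < n := by omega
              exact_mod_cast this
            have hsq : (0:ℝ) < Real.sqrt n := Real.sqrt_pos.2 hn0
            have ht : 0 < d * Real.sqrt n := by positivity
            calc ℙ {ω | c * Real.sqrt n ≤ |b i n ω|}
                ≤ ℙ {ω | d * Real.sqrt n < |b i n ω|} := by
                  refine measure_mono fun ω hω => ?_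
                  simp only [Set.mem_setOf_eq] at hω ⊢
                  have hlt : d * Real.sqrt n < c * Real.sqrt n := by
                    apply mul_lt_mul_of_pos_right _ hsq
                    rw [hd]; linarith
                  linarith
              _ ≤ ENNReal.ofReal M * ℙ {ω | d * Real.sqrt n < |X ω|} := htail _ ht i n hi
              _ ≤ ENNReal.ofReal M * ℙ {ω | (n:ℝ)^2 < Y ω} := by
                  refine mul_le_mul_right (measure_mono fun ω hω => ?_) _
                  simp only [Set.mem_setOf_eq] at hω ⊢
                  simp only [hYdef]
                  have h1 : Real.sqrt n < |X ω| / d := (lt_div_iff₀ hdpos).2 (by linarith)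
                  have h2 : (n:ℝ) < (|X ω| / d)^2 := by
                    nlinarith [Real.sq_sqrt hn0.le, Real.sqrt_nonneg (n:ℝ)]
                  nlinarith [hn0.le]
        _ = ENNReal.ofReal M * ((n:ℝ≥0∞) * ℙ {ω | (n:ℝ)^2 < Y ω}) := by
            rw [Finset.sum_const, Finset.card_range, nsmul_eq_mul]
            ring
    have h2 : ∑' n, ℙ (s n)
        ≤ ENNReal.ofReal M * ∑' n : ℕ, (n:ℝ≥0∞) * ℙ {ω | (n:ℝ)^2 < Y ω} := by
      rw [← ENNReal.tsum_mul_left]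
      exact ENNReal.tsum_le_tsum hbound
    exact ne_top_of_le_ne_top
      (ENNReal.mul_ne_top ENNReal.ofReal_ne_top (tsum_mul_meas_ne_top hYm hYint)) h2
  filter_upwards [MeasureTheory.ae_eventually_notMem hsum] with ω hω
  filter_upwards [hω] with n hn i hi
  by_contra hcon
  push_neg at hcon
  exact hn (Set.mem_biUnion (Finset.mem_range.2 hi) hcon)

lemma aux_pairs {Ω : Type*} [MeasureSpace Ω] [IsProbabilityMeasure (ℙ : Measure Ω)]
    (b : ℕ → ℕ → Ω → ℝ)
    (M : ℝ) (X : Ω → ℝ) (hXmeas : Measurable X)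
    (hX4 : Integrable (fun ω => |X ω| ^ 4) ℙ)
    (htail : ∀ t : ℝ, 0 < t → ∀ i j, i < j →
      ℙ {ω | t < |b i j ω|} ≤ ENNReal.ofReal M * ℙ {ω | t < |X ω|})
    (c : ℝ) (hc : 0 < c) :
    ∀ᵐ ω ∂ℙ, ∀ᶠ n : ℕ in atTop, ∀ i j, i < j → j ≤ n → |b i j ω| < c * Real.sqrt n := by
  filter_upwards [aux_column b M X hXmeas hX4 htail (c/2) (by positivity)] with ω hω
  obtain ⟨N, hN⟩ := eventually_atTop.1 hω
  set S := ∑ p ∈ Finset.range N ×ˢ Finset.range N, |b p.1 p.2 ω| with hS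
  have htend : Tendsto (fun n : ℕ => c * Real.sqrt n) atTop atTop :=
    Tendsto.const_mul_atTop hc sqrt_nat_tendsto
  filter_upwards [htend.eventually_gt_atTop S, eventually_ge_atTop 1] with n hn hn1
  intro i j hij hjn
  have hn0 : (0:ℝ) < n := by exact_mod_cast hn1
  have h3 : 0 < Real.sqrt n := Real.sqrt_pos.2 hn0
  rcases lt_or_ge j N with hjN | hjN
  · have hmem : (i,j) ∈ Finset.range N ×ˢ Finset.range N := by
      rw [Finset.mem_product, Finset.mem_range, Finset.mem_range]
      exact ⟨lt_trans hij hjN, hjN⟩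
    have hle : |b i j ω| ≤ S :=
      Finset.single_le_sum (f := fun p : ℕ × ℕ => |b p.1 p.2 ω|)
        (fun p _ => abs_nonneg _) hmem
    linarith
  · have h1 := hN j hjN i hij
    have h2 : Real.sqrt j ≤ Real.sqrt n := Real.sqrt_le_sqrt (by exact_mod_cast hjn)
    have hc2 : (0:ℝ) < c/2 := by positivity
    calc |b i j ω| < c/2 * Real.sqrt j := h1
      _ ≤ c/2 * Real.sqrt n := by nlinarith
      _ < c * Real.sqrt n := by nlinarith

/-- If `(b i j)_{i<j}` are independent, centered random variables whose tails are uniformly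
dominated by those of a random variable `X` with finite fourth moment, then there is a
sequence of positive reals `ε n → 0` such that almost surely, for all but finitely many `n`,
every entry `b i j` with `i < j ≤ n` satisfies `|b i j| < ε n * √n`. -/
theorem entrywise_little_o_sqrt
    {Ω : Type*} [MeasureSpace Ω] [IsProbabilityMeasure (ℙ : Measure Ω)]
    (b : ℕ → ℕ → Ω → ℝ) (hmeas : ∀ i j, i < j → Measurable (b i j))
    (hcent : ∀ i j, i < j → ∫ ω, b i j ω ∂ℙ = 0)
    (M : ℝ) (hM : 0 < M)
    (X : Ω → ℝ) (hXmeas : Measurable X)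
    (hX4 : Integrable (fun ω => |X ω| ^ 4) ℙ)
    (htail : ∀ t : ℝ, 0 < t → ∀ i j, i < j →
      ℙ {ω | t < |b i j ω|} ≤ ENNReal.ofReal M * ℙ {ω | t < |X ω|})
    (hindep : iIndepFun
      (fun p : {p : ℕ × ℕ // p.1 < p.2} => b p.1.1 p.1.2) ℙ) :
    ∃ ε : ℕ → ℝ, (∀ n, 0 < ε n) ∧ Tendsto ε atTop (nhds 0) ∧
      ∀ᵐ ω ∂ℙ, ∀ᶠ n : ℕ in atTop, ∀ i j : ℕ, i < j → j ≤ n →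
        |b i j ω| < ε n * Real.sqrt n := by

  classical
  set F : ℕ → ℕ → Set Ω := fun k N =>
    {ω | ∀ n, N ≤ n → ∀ i j, i < j → j ≤ n →
      |b i j ω| < ((k:ℝ)+2)⁻¹ * Real.sqrt n} with hF
  have hFmeas : ∀ k N, MeasurableSet (F k N) := by
    intro k N
    have hrw : F k N = ⋂ (n : ℕ) (i : ℕ) (j : ℕ),
        {ω | N ≤ n → i < j → j ≤ n → |b i j ω| < ((k:ℝ)+2)⁻¹ * Real.sqrt n} := by
      ext ω
      simp only [hF, Set.mem_setOf_eq, Set.mem_iInter]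
      tauto
    rw [hrw]
    refine MeasurableSet.iInter fun n => MeasurableSet.iInter fun i =>
      MeasurableSet.iInter fun j => ?_
    by_cases h : N ≤ n ∧ i < j ∧ j ≤ n
    · obtain ⟨h1, h2, h3⟩ := h
      have : {ω : Ω | N ≤ n → i < j → j ≤ n → |b i j ω| < ((k:ℝ)+2)⁻¹ * Real.sqrt n}
          = {ω : Ω | |b i j ω| < ((k:ℝ)+2)⁻¹ * Real.sqrt n} := by
        ext ω; simp [h1, h2, h3]
      rw [this]
      exact measurableSet_lt (hmeas i j h2).abs measurable_const
    · have : {ω : Ω | N ≤ n → i < j → j ≤ n → |b i j ω| < ((k:ℝ)+2)⁻¹ * Real.sqrt n}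
          = Set.univ := by
        ext ω
        simp only [Set.mem_setOf_eq, Set.mem_univ, iff_true]
        intro hn hij hjn
        exact absurd ⟨hn, hij, hjn⟩ h
      rw [this]
      exact MeasurableSet.univ
  have hFmono : ∀ k, Monotone (F k) := by
    intro k N N' h ω hω n hn i j hij hjn
    exact hω n (le_trans h hn) i j hij hjn
  have hex : ∀ k : ℕ, ∃ N, ℙ ((F k N)ᶜ) ≤ (2:ℝ≥0∞)⁻¹ ^ k := by
    intro k
    have hnull : ℙ (⋂ N, (F k N)ᶜ) = 0 := by
      have hc : (0:ℝ) < ((k:ℝ)+2)⁻¹ := by positivity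
      have hae := aux_pairs b M X hXmeas hX4 htail _ hc
      rw [MeasureTheory.ae_iff] at hae
      refine measure_mono_null (fun ω hω => ?_) hae
      simp only [Set.mem_iInter, Set.mem_compl_iff] at hω
      simp only [Set.mem_setOf_eq]
      intro hcon
      obtain ⟨N, hN⟩ := eventually_atTop.1 hcon
      exact hω N fun n hn i j hij hjn => hN n hn i j hij hjn
    have htendk := tendsto_measure_iInter_atTop
      (fun N => ((hFmeas k N).compl).nullMeasurableSet)
      (fun N N' h => Set.compl_subset_compl.2 (hFmono k h))
      ⟨0, measure_ne_top ℙ _⟩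
    rw [hnull] at htendk
    have hpos : (0:ℝ≥0∞) < 2⁻¹ ^ k := by
      apply ENNReal.pow_pos
      simp
    obtain ⟨N, hN⟩ := (htendk.eventually (gt_mem_nhds hpos)).exists
    exact ⟨N, hN.le⟩
  choose N₀ hN₀ using hex
  set N' : ℕ → ℕ := fun k => ∑ j ∈ Finset.range (k+1), (N₀ j + 1) with hN'
  have hN'mono : Monotone N' := fun a c h =>
    Finset.sum_le_sum_of_subset (Finset.range_subset_range.2 (by omega))
  have hN'ge : ∀ k, N₀ k ≤ N' k := by
    intro k
    have : N₀ k + 1 ≤ N' k :=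
      Finset.single_le_sum (f := fun j => N₀ j + 1) (fun j _ => Nat.zero_le _)
        (Finset.mem_range.2 (by omega))
    omega
  have hN'big : ∀ n, n < N' n := by
    intro n
    have : n + 1 ≤ N' n := by
      calc n + 1 = ∑ _j ∈ Finset.range (n+1), 1 := by simp
        _ ≤ N' n := Finset.sum_le_sum fun j _ => by omega
    omega
  have hexk : ∀ n : ℕ, ∃ k, n < N' k := fun n => ⟨n, hN'big n⟩
  have hBC : ∑' k, ℙ ((F k (N' k))ᶜ) ≠ ∞ := by
    have hle : ∑' k, ℙ ((F k (N' k))ᶜ) ≤ ∑' k : ℕ, (2:ℝ≥0∞)⁻¹ ^ k := by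
      refine ENNReal.tsum_le_tsum fun k => ?_
      refine le_trans (measure_mono (Set.compl_subset_compl.2 (hFmono k (hN'ge k)))) (hN₀ k)
    refine ne_top_of_le_ne_top ?_ hle
    rw [ENNReal.tsum_geometric, ENNReal.one_sub_inv_two]
    simp
  have hae := MeasureTheory.ae_eventually_notMem hBC
  have hKbig : ∀ k n, N' k ≤ n → k < Nat.find (hexk n) := by
    intro k n hn
    rw [Nat.lt_find_iff]
    intro m hm
    exact not_lt.2 (le_trans (hN'mono hm) hn)
  refine ⟨fun n => ((Nat.find (hexk n) : ℝ) + 1)⁻¹, fun n => by positivity, ?_, ?_⟩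
  · have hK : Tendsto (fun n => Nat.find (hexk n)) atTop atTop :=
      tendsto_atTop_atTop.2 fun k => ⟨N' k, fun n hn => (hKbig k n hn).le⟩
    have : Tendsto (fun n => ((Nat.find (hexk n) : ℝ) + 1)) atTop atTop :=
      tendsto_atTop_add_const_right _ 1 (tendsto_natCast_atTop_atTop.comp hK)
    exact this.inv_tendsto_atTop
  · filter_upwards [hae] with ω hω
    obtain ⟨K₀, hK₀⟩ := eventually_atTop.1 hω
    rw [eventually_atTop]
    refine ⟨N' K₀, fun n hn i j hij hjn => ?_⟩
    have hKn : K₀ < Nat.find (hexk n) := hKbig K₀ n hn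
    set k := Nat.find (hexk n) - 1 with hk
    have hk1 : k + 1 = Nat.find (hexk n) := by omega
    have hNk : N' k ≤ n := by
      have := Nat.find_min (hexk n) (show k < Nat.find (hexk n) by omega)
      omega
    have hmem : ω ∈ F k (N' k) := by
      have := hK₀ k (by omega)
      rwa [Set.notMem_compl_iff] at this
    have hlt := hmem n hNk i j hij hjn
    have hcast : ((Nat.find (hexk n) : ℝ) + 1)⁻¹ = ((k:ℝ)+2)⁻¹ := by
      rw [← hk1]
      push_cast
      ring_nf
    rw [hcast]
    exact hlt
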